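/- Let C_v, γ_v > 0, K ≥ 1, h ∈ (0,1], and let λ ∈ (0,1] and η > 0 satisfy (γ_v e η)^{2λ} ≤ 1. If hK/p ≤ η for a positive integer p with λp an integer, then C_v² (γ_v h)^{2(λp+1)} K^{2λp+1} · ((p−λp)!/(p+λp)!) ≤ e C_v² h² γ_v² K ((1−λ)^{1−λ}/(1+λ)^{1+λ})^p. -/

import Mathlib

open Real Filter

private lemma sqrtpi_le_stirlingSeq (n : ℕ) (hn : 1 ≤ n) : Real.sqrt π ≤ Stirling.stirlingSeq n := by
  have hanti := Stirling.stirlingSeq'_antitone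
  have htend : Tendsto (Stirling.stirlingSeq ∘ Nat.succ) atTop (nhds (Real.sqrt π)) := by
    exact Stirling.tendsto_stirlingSeq_sqrt_pi.comp (tendsto_add_atTop_nat 1)
  have := hanti.le_of_tendsto htend (n - 1)
  simpa [Function.comp, Nat.succ_eq_add_one, Nat.sub_add_cancel hn] using this

private lemma stirlingSeq_le (n : ℕ) (hn : 1 ≤ n) :
    Stirling.stirlingSeq n ≤ Real.exp 1 / Real.sqrt 2 := by
  have hanti := Stirling.stirlingSeq'_antitone
  have := hanti (Nat.zero_le (n - 1))
  simp only [Function.comp, Nat.succ_eq_add_one, Nat.sub_add_cancel hn, zero_add] at this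
  simpa [Stirling.stirlingSeq_one] using this

private lemma stirling_lower (n : ℕ) (hn : 1 ≤ n) :
    Real.sqrt π * (Real.sqrt (2 * n) * ((n : ℝ) / Real.exp 1) ^ n) ≤ (n.factorial : ℝ) := by
  have hd : 0 < Real.sqrt (2 * (n : ℝ)) * ((n : ℝ) / Real.exp 1) ^ n := by
    have hn0 : (0 : ℝ) < n := by exact_mod_cast hn
    positivity
  have := sqrtpi_le_stirlingSeq n hn
  rw [Stirling.stirlingSeq, le_div_iff₀ hd] at this
  linarith

private lemma stirling_upper (n : ℕ) (hn : 1 ≤ n) :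
    (n.factorial : ℝ) ≤ Real.exp 1 / Real.sqrt 2 * (Real.sqrt (2 * n) * ((n : ℝ) / Real.exp 1) ^ n) := by
  have hd : 0 < Real.sqrt (2 * (n : ℝ)) * ((n : ℝ) / Real.exp 1) ^ n := by
    have hn0 : (0 : ℝ) < n := by exact_mod_cast hn
    positivity
  have := stirlingSeq_le n hn
  rw [Stirling.stirlingSeq, div_le_iff₀ hd] at this
  linarith

/-- Key factorial ratio bound: a!/b! ≤ e·e^(b-a)·a^a/b^b for a ≤ b, 1 ≤ b. -/
private lemma ratio_bound (a b : ℕ) (hab : a ≤ b) (hb : 1 ≤ b) :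
    (a.factorial : ℝ) / (b.factorial : ℝ) ≤
      Real.exp 1 * Real.exp 1 ^ (b - a) * ((a : ℝ) ^ a / (b : ℝ) ^ b) := by
  have hb0 : (0 : ℝ) < b := by exact_mod_cast hb
  have hbf : (0 : ℝ) < (b.factorial : ℝ) := by exact_mod_cast b.factorial_pos
  have he : (0 : ℝ) < Real.exp 1 := Real.exp_pos 1
  rcases Nat.eq_zero_or_pos a with ha0 | ha
  · subst ha0
    simp only [Nat.factorial_zero, Nat.cast_one, Nat.cast_zero, Nat.sub_zero, pow_zero]
    -- goal: 1 / b! ≤ e * e^b * (1 / b^b)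
    have h1 : ((b : ℝ)) ^ b / (b.factorial : ℝ) ≤ Real.exp 1 ^ b := by
      have := Real.pow_div_factorial_le_exp (x := (b : ℝ)) (by positivity) b
      calc ((b : ℝ)) ^ b / (b.factorial : ℝ) ≤ Real.exp (b : ℝ) := this
        _ = Real.exp 1 ^ b := by rw [← Real.exp_nat_mul]; ring_nf
    have hbpow : (0 : ℝ) < (b : ℝ) ^ b := by positivity
    have h1e : (1 : ℝ) ≤ Real.exp 1 := Real.one_le_exp (by norm_num)
    have h3 : (1 : ℝ) / (b.factorial : ℝ) ≤ Real.exp 1 ^ b / (b : ℝ) ^ b := by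
      rw [div_le_div_iff₀ hbf hbpow]
      rw [div_le_iff₀ hbf] at h1
      nlinarith
    calc (1 : ℝ) / (b.factorial : ℝ) ≤ Real.exp 1 ^ b / (b : ℝ) ^ b := h3
      _ ≤ Real.exp 1 * Real.exp 1 ^ b * (1 / (b : ℝ) ^ b) := by
          rw [mul_one_div]
          apply div_le_div_of_nonneg_right ?_ hbpow.le
          nlinarith [pow_pos he b]
  · -- a ≥ 1
    have ha0 : (0 : ℝ) < a := by exact_mod_cast ha
    have hU := stirling_upper a ha
    have hL := stirling_lower b hb
    have hbd : 0 < Real.sqrt π * (Real.sqrt (2 * b) * ((b : ℝ) / Real.exp 1) ^ b) := by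
      have : (0 : ℝ) < π := Real.pi_pos
      positivity
    have hba' : Real.exp 1 ^ (b - a) = Real.exp 1 ^ b / Real.exp 1 ^ a := by
      rw [eq_div_iff (by positivity), ← pow_add]
      congr 1; omega
    have hXY : Real.sqrt (2 * (a:ℝ)) ≤ Real.sqrt 2 * (Real.sqrt π * Real.sqrt (2 * (b:ℝ))) := by
      have hsa : Real.sqrt (2 * (a:ℝ)) ≤ Real.sqrt (2 * (b:ℝ)) := by
        apply Real.sqrt_le_sqrt
        have : (a : ℝ) ≤ b := by exact_mod_cast hab
        linarith
      have hsp : (1 : ℝ) ≤ Real.sqrt 2 * Real.sqrt π := by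
        rw [← Real.sqrt_mul (by norm_num)]
        rw [show (1:ℝ) = Real.sqrt 1 by simp]
        apply Real.sqrt_le_sqrt
        nlinarith [Real.pi_gt_three]
      nlinarith [Real.sqrt_nonneg (2 * (b:ℝ))]
    have step1 : (a.factorial : ℝ) / (b.factorial : ℝ) ≤
        (Real.exp 1 / Real.sqrt 2 * (Real.sqrt (2 * a) * ((a : ℝ) / Real.exp 1) ^ a)) /
          (Real.sqrt π * (Real.sqrt (2 * b) * ((b : ℝ) / Real.exp 1) ^ b)) :=
      div_le_div₀ (by positivity) hU hbd hL
    refine step1.trans ?_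
    rw [div_le_iff₀ hbd, hba', div_pow, div_pow]
    have hea : (0 : ℝ) < Real.exp 1 ^ a := by positivity
    have heb : (0 : ℝ) < Real.exp 1 ^ b := by positivity
    have hba : (0 : ℝ) < (b : ℝ) ^ b := by positivity
    have haa : (0 : ℝ) < (a : ℝ) ^ a := by positivity
    have h2 : (0:ℝ) < Real.sqrt 2 := by positivity
    have e1 : Real.exp 1 / Real.sqrt 2 * (Real.sqrt (2 * (a:ℝ)) * ((a:ℝ) ^ a / Real.exp 1 ^ a))
        = Real.sqrt (2 * (a:ℝ)) * (Real.exp 1 * (a:ℝ) ^ a / (Real.sqrt 2 * Real.exp 1 ^ a)) := by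
      field_simp
    have e2 : Real.exp 1 * (Real.exp 1 ^ b / Real.exp 1 ^ a) * ((a:ℝ) ^ a / (b:ℝ) ^ b) *
          (Real.sqrt π * (Real.sqrt (2 * (b:ℝ)) * ((b:ℝ) ^ b / Real.exp 1 ^ b)))
        = (Real.sqrt 2 * (Real.sqrt π * Real.sqrt (2 * (b:ℝ)))) *
          (Real.exp 1 * (a:ℝ) ^ a / (Real.sqrt 2 * Real.exp 1 ^ a)) := by
      field_simp
    rw [e1, e2]
    apply mul_le_mul_of_nonneg_right hXY
    positivity

theorem stmt_9 (Cv γv K h η lam : ℝ) (p m : ℕ)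
    (hCv : 0 < Cv) (hγv : 0 < γv) (hK : 1 ≤ K) (hh : 0 < h) (hh1 : h ≤ 1)
    (hlam : 0 < lam) (hlam1 : lam ≤ 1) (hη : 0 < η)
    (hcond : (γv * Real.exp 1 * η) ^ (2 * lam) ≤ 1)
    (hp : 0 < p) (hm : (m : ℝ) = lam * p) (hres : h * K / p ≤ η) :
    Cv ^ 2 * (γv * h) ^ (2 * (m + 1)) * K ^ (2 * m + 1) *
        (((p - m).factorial : ℝ) / ((p + m).factorial : ℝ))
      ≤ Real.exp 1 * Cv ^ 2 * h ^ 2 * γv ^ 2 * K *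
        ((1 - lam) ^ (1 - lam) / (1 + lam) ^ (1 + lam)) ^ p := by
  have he : (0 : ℝ) < Real.exp 1 := Real.exp_pos 1
  have hq0 : (0 : ℝ) < p := by exact_mod_cast hp
  have hK0 : (0 : ℝ) < K := by linarith
  have hmp : m ≤ p := by
    have : (m : ℝ) ≤ p := by rw [hm]; nlinarith
    exact_mod_cast this
  set q : ℝ := (p : ℝ) with hqdef
  have ha' : ((p - m : ℕ) : ℝ) = (1 - lam) * q := by
    push_cast [hmp]; rw [hm]; ring
  have hb' : ((p + m : ℕ) : ℝ) = (1 + lam) * q := by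
    push_cast; rw [hm]; ring
  -- Step B : (γv*h*K)^(2m) ≤ (q/e)^(2m)
  have hhk : h * K ≤ η * q := by
    rw [div_le_iff₀ hq0] at hres; linarith
  have hBase : γv * h * K ≤ γv * Real.exp 1 * η * (q / Real.exp 1) := by
    have : γv * Real.exp 1 * η * (q / Real.exp 1) = γv * (η * q) := by
      field_simp
    rw [this]
    calc γv * h * K = γv * (h * K) := by ring
      _ ≤ γv * (η * q) := by nlinarith
  have hcond2 : (γv * Real.exp 1 * η) ^ (2 * m) ≤ 1 := by
    have hx0 : (0 : ℝ) ≤ γv * Real.exp 1 * η := by positivity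
    have h1 : ((γv * Real.exp 1 * η) ^ (2 * lam)) ^ p ≤ 1 :=
      pow_le_one₀ (Real.rpow_nonneg hx0 _) hcond
    have h2 : ((γv * Real.exp 1 * η) ^ (2 * lam)) ^ p = (γv * Real.exp 1 * η) ^ (2 * m) := by
      rw [← Real.rpow_natCast ((γv * Real.exp 1 * η) ^ (2 * lam)) p,
        ← Real.rpow_mul hx0]
      have : 2 * lam * (p : ℝ) = ((2 * m : ℕ) : ℝ) := by push_cast; rw [hm]; ring
      rw [this, Real.rpow_natCast]
    rwa [h2] at h1
  have hB : (γv * h * K) ^ (2 * m) ≤ (q / Real.exp 1) ^ (2 * m) := by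
    calc (γv * h * K) ^ (2 * m)
        ≤ (γv * Real.exp 1 * η * (q / Real.exp 1)) ^ (2 * m) := by
          apply pow_le_pow_left₀ (by positivity) hBase
      _ = (γv * Real.exp 1 * η) ^ (2 * m) * (q / Real.exp 1) ^ (2 * m) := mul_pow _ _ _
      _ ≤ 1 * (q / Real.exp 1) ^ (2 * m) := by
          apply mul_le_mul_of_nonneg_right hcond2 (by positivity)
      _ = (q / Real.exp 1) ^ (2 * m) := one_mul _
  -- Step C : factorial ratio
  have hC := ratio_bound (p - m) (p + m) (by omega) (by omega)
  have hsub : (p + m) - (p - m) = 2 * m := by omega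
  rw [hsub] at hC
  -- Step D : the identity
  have h1lam : (0 : ℝ) ≤ 1 - lam := by linarith
  have h1lam' : (0 : ℝ) < 1 + lam := by linarith
  have hD : (q / Real.exp 1) ^ (2 * m) *
      (Real.exp 1 * Real.exp 1 ^ (2 * m) * (((p - m : ℕ) : ℝ) ^ (p - m) / ((p + m : ℕ) : ℝ) ^ (p + m)))
      = Real.exp 1 * ((1 - lam) ^ (1 - lam) / (1 + lam) ^ (1 + lam)) ^ p := by
    have hqpos : (0 : ℝ) < q := hq0
    have hqe : ((q / Real.exp 1) * Real.exp 1) ^ (2 * m) = q ^ (2 * m) := by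
      rw [div_mul_cancel₀ _ (ne_of_gt he)]
    have hanat : ((p - m : ℕ) : ℝ) ^ (p - m) = ((1 - lam) ^ ((1 - lam) * q) * q ^ ((1 - lam) * q) : ℝ) := by
      rw [← Real.rpow_natCast ((p - m : ℕ) : ℝ) (p - m), ha',
        Real.mul_rpow h1lam (le_of_lt hqpos)]
    have hbnat : ((p + m : ℕ) : ℝ) ^ (p + m) = ((1 + lam) ^ ((1 + lam) * q) * q ^ ((1 + lam) * q) : ℝ) := by
      rw [← Real.rpow_natCast ((p + m : ℕ) : ℝ) (p + m), hb',
        Real.mul_rpow (le_of_lt h1lam') (le_of_lt hqpos)]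
    have hqm : q ^ (2 * m) = q ^ ((2 * lam) * q : ℝ) := by
      rw [← Real.rpow_natCast q (2 * m)]
      congr 1
      push_cast; rw [hm]; ring
    have hqcancel : q ^ ((2 * lam) * q : ℝ) * q ^ ((1 - lam) * q : ℝ) / q ^ ((1 + lam) * q : ℝ) = 1 := by
      rw [← Real.rpow_add hqpos, ← Real.rpow_sub hqpos]
      norm_num
      rw [show 2 * lam * q + (1 - lam) * q - (1 + lam) * q = 0 by ring, Real.rpow_zero]
    have hth1 : ((1 - lam) ^ (1 - lam) : ℝ) ^ p = (1 - lam) ^ ((1 - lam) * q) := by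
      rw [← Real.rpow_natCast ((1 - lam) ^ (1 - lam) : ℝ) p, ← Real.rpow_mul h1lam]
    have hth2 : ((1 + lam) ^ (1 + lam) : ℝ) ^ p = (1 + lam) ^ ((1 + lam) * q) := by
      rw [← Real.rpow_natCast ((1 + lam) ^ (1 + lam) : ℝ) p, ← Real.rpow_mul (le_of_lt h1lam')]
    have hsplit : q ^ ((1 + lam) * q : ℝ) = q ^ (2 * lam * q : ℝ) * q ^ ((1 - lam) * q : ℝ) := by
      rw [← Real.rpow_add hqpos]
      congr 1; ring
    rw [div_pow, div_pow, hth1, hth2, hanat, hbnat, hqm, hsplit]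
    have ne1 : ((1 + lam) : ℝ) ^ ((1 + lam) * q) ≠ 0 := ne_of_gt (Real.rpow_pos_of_pos h1lam' _)
    have ne2 : q ^ (2 * lam * q : ℝ) ≠ 0 := ne_of_gt (Real.rpow_pos_of_pos hqpos _)
    have ne3 : q ^ ((1 - lam) * q : ℝ) ≠ 0 := ne_of_gt (Real.rpow_pos_of_pos hqpos _)
    have ne4 : Real.exp 1 ^ (2 * m) ≠ 0 := by positivity
    field_simp
  -- Combine
  have hLHSeq : Cv ^ 2 * (γv * h) ^ (2 * (m + 1)) * K ^ (2 * m + 1) *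
      (((p - m).factorial : ℝ) / ((p + m).factorial : ℝ))
      = (Cv ^ 2 * γv ^ 2 * h ^ 2 * K) * ((γv * h * K) ^ (2 * m) *
        (((p - m).factorial : ℝ) / ((p + m).factorial : ℝ))) := by
    rw [show 2 * (m + 1) = 2 * m + 2 by ring, pow_add, show 2 * m + 1 = 2 * m + 1 by rfl,
      pow_succ, mul_pow]
    ring
  rw [hLHSeq]
  have hfinal : (γv * h * K) ^ (2 * m) * (((p - m).factorial : ℝ) / ((p + m).factorial : ℝ))
      ≤ Real.exp 1 * ((1 - lam) ^ (1 - lam) / (1 + lam) ^ (1 + lam)) ^ p := by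
    rw [← hD]
    apply mul_le_mul hB hC (by positivity) (by positivity)
  calc (Cv ^ 2 * γv ^ 2 * h ^ 2 * K) * ((γv * h * K) ^ (2 * m) *
        (((p - m).factorial : ℝ) / ((p + m).factorial : ℝ)))
      ≤ (Cv ^ 2 * γv ^ 2 * h ^ 2 * K) *
        (Real.exp 1 * ((1 - lam) ^ (1 - lam) / (1 + lam) ^ (1 + lam)) ^ p) := by
        apply mul_le_mul_of_nonneg_left hfinal (by positivity)
    _ = Real.exp 1 * Cv ^ 2 * h ^ 2 * γv ^ 2 * K *
        ((1 - lam) ^ (1 - lam) / (1 + lam) ^ (1 + lam)) ^ p := by ring
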